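/- Let k ≥ 2 and n ≥ 2 be integers, suppose the characteristic of F_q is not 2, and let λ ∈ F_q be nonzero. Then for all q > n²k¹⁶, there exist n pairs (x₁, y₁), …, (x_n, y_n) ∈ F_q × F_q such that: (i) x_i^k + y_i^k = λ for all 1 ≤ i ≤ n; (ii) x_i^k ≠ y_i^k for all 1 ≤ i ≤ n; (iii) x_i^k ≠ x_j^k and y_i^k ≠ y_j^k for all i ≠ j. -/

import Mathlib

open Finset Complex


/-- Nonzero values of a multiplicative character into ℂ have norm 1. -/
lemma aux_norm_one {F : Type*} [Field F] [Fintype F] (ψ : MulChar F ℂ) {b : F} (hb : b ≠ 0) :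
    ‖ψ b‖ = 1 := by
  have h : (ψ b) ^ (Fintype.card F - 1) = 1 := by
    rw [← map_pow, FiniteField.pow_card_sub_one_eq_one b hb, map_one]
  exact Complex.norm_eq_one_of_pow_eq_one h (by
    have := Fintype.one_lt_card (α := F); omega)

/-- conjugate of a Jacobi sum. -/
lemma aux_conj_jacobi {F : Type*} [Field F] [Fintype F] (χ φ : MulChar F ℂ) :
    (starRingEnd ℂ) (jacobiSum χ φ) = jacobiSum χ⁻¹ φ⁻¹ := by
  rw [jacobiSum, jacobiSum, map_sum]
  refine Finset.sum_congr rfl fun x _ => ?_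
  rw [map_mul, starRingEnd_apply, starRingEnd_apply, MulChar.star_apply', MulChar.star_apply']

lemma aux_abs_jacobi {F : Type*} [Field F] [Fintype F] {χ φ : MulChar F ℂ}
    (hχ : χ ≠ 1) (hφ : φ ≠ 1) (hχφ : χ * φ ≠ 1) :
    ‖jacobiSum χ φ‖ = Real.sqrt (Fintype.card F) := by
  have hrc : ringChar ℂ ≠ ringChar F := by
    have hp : (ringChar F).Prime := CharP.char_is_prime F (ringChar F)
    rw [ringChar.eq_zero]
    exact fun h => hp.ne_zero h.symm
  have h2 := jacobiSum_mul_jacobiSum_inv hrc hχ hφ hχφ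
  rw [← aux_conj_jacobi, Complex.mul_conj] at h2
  have h4 : Complex.normSq (jacobiSum χ φ) = (Fintype.card F : ℝ) := by exact_mod_cast h2
  rw [Complex.norm_def, h4]


lemma aux_translate {F : Type*} [Field F] [Fintype F] (ψ₁ ψ₂ : MulChar F ℂ) {lam : F}
    (hlam : lam ≠ 0) :
    ∑ a : F, ψ₁ a * ψ₂ (lam - a) = ψ₁ lam * ψ₂ lam * jacobiSum ψ₁ ψ₂ := by
  rw [jacobiSum, Finset.mul_sum]
  refine (Fintype.sum_equiv (Equiv.mulLeft₀ lam hlam) _ _ fun x => ?_).symm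
  have h1 : lam - lam * x = lam * (1 - x) := by ring
  simp only [Equiv.mulLeft₀_apply, h1, map_mul]
  ring

lemma aux_ker_pow {F : Type*} [Field F] [Fintype F] {k : ℕ} (hk : k ≠ 0)
    (χ : MulChar F ℂ) (hχ : orderOf χ = Nat.gcd k (Fintype.card F - 1))
    {a : F} (ha : a ≠ 0) (h1 : χ a = 1) : ∃ x : F, x ^ k = a := by
  classical
  obtain ⟨g, hg⟩ := IsCyclic.exists_generator (α := Fˣ)
  set φ := χ.toUnitHom with hφdef
  have hφg : ∀ u : Fˣ, ((φ u : ℂ)) = χ ↑u := fun u => χ.coe_toUnitHom u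
  have hdvd1 : orderOf (φ g) ∣ orderOf χ := by
    apply orderOf_dvd_of_pow_eq_one
    apply Units.ext
    rw [Units.val_pow_eq_pow_val, Units.val_one, hφg, ← MulChar.pow_apply_coe,
      pow_orderOf_eq_one, MulChar.one_apply_coe]
  have hdvd2 : orderOf χ ∣ orderOf (φ g) := by
    apply orderOf_dvd_of_pow_eq_one
    apply MulChar.ext
    intro u
    obtain ⟨t, ht'⟩ := hg u
    have ht : g ^ t = u := ht'
    rw [MulChar.pow_apply_coe, MulChar.one_apply_coe, ← ht]
    have h2 : χ ↑(g ^ t) = ((((φ g) ^ t : ℂˣ)) : ℂ) := by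
      rw [← map_zpow]; exact (hφg _).symm
    rw [h2, ← Units.val_pow_eq_pow_val, ← zpow_natCast ((φ g) ^ t), ← zpow_mul, mul_comm,
      zpow_mul, zpow_natCast, pow_orderOf_eq_one, one_zpow, Units.val_one]
  have hord : orderOf (φ g) = Nat.gcd k (Fintype.card F - 1) := by
    rw [← hχ]; exact Nat.dvd_antisymm hdvd1 hdvd2
  obtain ⟨t, ht'⟩ := hg (Units.mk0 a ha)
  have ht : g ^ t = Units.mk0 a ha := ht'
  have hφt : (φ g) ^ t = 1 := by
    apply Units.ext
    rw [← map_zpow, hφg, ht, Units.val_one]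
    exact h1
  obtain ⟨s, hs⟩ := orderOf_dvd_iff_zpow_eq_one.mpr hφt
  set q1 := Fintype.card F - 1
  set A := Nat.gcdA k q1
  set B := Nat.gcdB k q1
  have hbez : (Nat.gcd k q1 : ℤ) = k * A + q1 * B := Nat.gcd_eq_gcd_ab k q1
  have hgq : g ^ ((q1 : ℕ) : ℤ) = 1 := by
    rw [zpow_natCast]
    have : q1 = Fintype.card Fˣ := (Fintype.card_units (α := F)).symm
    rw [this]
    exact pow_card_eq_one
  refine ⟨↑(g ^ (A * s)), ?_⟩
  have key : (g ^ (A * s)) ^ (k : ℤ) = Units.mk0 a ha := by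
    have h3 : g ^ t = (g ^ (A * s)) ^ (k : ℤ) * (g ^ ((q1 : ℕ) : ℤ)) ^ (B * s) := by
      rw [← zpow_mul, ← zpow_mul, ← zpow_add, hs, hord, hbez]
      congr 1
      ring
    rw [← ht, h3, hgq, one_zpow, mul_one]
  have := congrArg (Units.val) key
  rw [Units.val_zpow_eq_zpow_val, Units.val_mk0] at this
  rw [← this, zpow_natCast]





lemma aux_count {F : Type*} [Field F] [Fintype F] [DecidableEq F] (χ : MulChar F ℂ) {d : ℕ}
    (hd : orderOf χ = d) {lam : F} (hlam : lam ≠ 0) :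
    (Fintype.card F : ℝ) - 2 - ((d * d - 1 : ℕ)) * Real.sqrt (Fintype.card F)
      ≤ (d : ℝ) ^ 2 * (univ.filter (fun a : F => χ a = 1 ∧ χ (lam - a) = 1)).card := by
  set q := Fintype.card F with hq
  have hd0 : 0 < d := hd ▸ orderOf_pos χ
  set S := univ.filter (fun a : F => χ a = 1 ∧ χ (lam - a) = 1) with hS
  set w : F → ℂ := fun a => ∑ j ∈ range d, (χ ^ j) a with hwdef
  have hχ0 : ∀ {a : F}, χ a = 1 → a ≠ 0 := by
    intro a h h0
    rw [h0, MulChar.map_nonunit χ not_isUnit_zero] at h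
    exact one_ne_zero h.symm
  have hpow : ∀ (j : ℕ) {a : F}, a ≠ 0 → (χ ^ j) a = χ a ^ j := by
    intro j a ha
    have hu := ha.isUnit
    conv_lhs => rw [show a = ↑hu.unit from hu.unit_spec.symm]
    rw [MulChar.pow_apply_coe, hu.unit_spec]
  have hw0 : w 0 = 0 := by
    rw [hwdef]
    refine Finset.sum_eq_zero fun j _ => MulChar.map_nonunit _ not_isUnit_zero
  have hwu : ∀ {a : F}, a ≠ 0 → w a = if χ a = 1 then (d : ℂ) else 0 := by
    intro a ha
    have hχd : χ ^ d = 1 := by rw [← hd]; exact pow_orderOf_eq_one χ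
    have hz : χ a ^ d = 1 := by
      rw [← hpow d ha, hχd, MulChar.one_apply ha.isUnit]
    rw [hwdef]
    simp only
    rw [Finset.sum_congr rfl fun j _ => hpow j ha]
    by_cases h1 : χ a = 1
    · simp [h1]
    · rw [if_neg h1, geom_sum_eq h1, hz, sub_self, zero_div]
  set T : ℕ × ℕ → ℂ := fun p => ∑ a : F, (χ ^ p.1) a * (χ ^ p.2) (lam - a) with hT
  have E2 : ∑ a : F, w a * w (lam - a) = (d : ℂ) ^ 2 * S.card := by
    have : ∀ a : F, w a * w (lam - a) = if a ∈ S then (d : ℂ) ^ 2 else 0 := by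
      intro a
      by_cases hmem : a ∈ S
      · rw [if_pos hmem]
        rw [hS, mem_filter] at hmem
        obtain ⟨-, h1, h2⟩ := hmem
        rw [hwu (hχ0 h1), hwu (hχ0 h2), if_pos h1, if_pos h2, sq]
      · rw [if_neg hmem, hS, mem_filter] at *
        push_neg at hmem
        by_cases h1 : χ a = 1
        · have h2 := hmem (mem_univ a) h1
          by_cases ha2 : lam - a = 0
          · rw [ha2, hw0, mul_zero]
          · rw [hwu ha2, if_neg h2, mul_zero]
        · by_cases ha : a = 0
          · rw [ha, hw0, zero_mul]
          · rw [hwu ha, if_neg h1, zero_mul]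
    rw [Finset.sum_congr rfl fun a _ => this a, Finset.sum_ite_mem, univ_inter,
      Finset.sum_const, nsmul_eq_mul, mul_comm]
  have E1 : ∑ a : F, w a * w (lam - a) = ∑ p ∈ range d ×ˢ range d, T p := by
    have : ∀ a : F, w a * w (lam - a)
        = ∑ p ∈ range d ×ˢ range d, (χ ^ p.1) a * (χ ^ p.2) (lam - a) := by
      intro a
      rw [hwdef]
      simp only
      rw [Finset.sum_mul_sum, ← Finset.sum_product']
    rw [Finset.sum_congr rfl fun a _ => this a, Finset.sum_comm]
  have hmem00 : ((0, 0) : ℕ × ℕ) ∈ range d ×ˢ range d := by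
    simp [mem_product, mem_range, hd0]
  have hT00 : T (0, 0) = (q : ℂ) - 2 := by
    rw [hT]
    simp only [pow_zero]
    rw [aux_translate 1 1 hlam, MulChar.one_apply hlam.isUnit, jacobiSum_one_one]
    push_cast
    ring
  have hnt : ∀ m, 0 < m → m < d → χ ^ m ≠ 1 := by
    intro m h1 h2 h3
    exact absurd (Nat.le_of_dvd h1 (hd ▸ orderOf_dvd_of_pow_eq_one h3)) (not_le.mpr h2)
  have hsq1 : (1 : ℝ) ≤ Real.sqrt q := by
    rw [show (1 : ℝ) = Real.sqrt 1 by simp]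
    exact Real.sqrt_le_sqrt (by exact_mod_cast Fintype.card_pos)
  have hbd : ∀ p ∈ (range d ×ˢ range d).erase (0, 0), ‖T p‖ ≤ Real.sqrt q := by
    rintro ⟨i, j⟩ hp
    rw [Finset.mem_erase, mem_product, mem_range, mem_range] at hp
    obtain ⟨hne, hi, hj⟩ := hp
    rw [hT]
    simp only
    rw [aux_translate _ _ hlam, norm_mul, norm_mul, aux_norm_one _ hlam, aux_norm_one _ hlam,
      one_mul, one_mul]
    by_cases hi0 : i = 0
    · have hj0 : j ≠ 0 := by rintro rfl; exact hne (by rw [hi0])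
      rw [hi0, pow_zero, jacobiSum_one_nontrivial (hnt j (Nat.pos_of_ne_zero hj0) hj)]
      simpa using hsq1
    · by_cases hj0 : j = 0
      · rw [hj0, pow_zero, jacobiSum_comm,
          jacobiSum_one_nontrivial (hnt i (Nat.pos_of_ne_zero hi0) hi)]
        simpa using hsq1
      · by_cases hij : χ ^ i * χ ^ j = 1
        · have : χ ^ j = (χ ^ i)⁻¹ := eq_inv_of_mul_eq_one_right hij
          rw [this, jacobiSum_nontrivial_inv (hnt i (Nat.pos_of_ne_zero hi0) hi), norm_neg,
            aux_norm_one _ (neg_ne_zero.mpr one_ne_zero)]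
          exact hsq1
        · rw [aux_abs_jacobi (hnt i (Nat.pos_of_ne_zero hi0) hi)
            (hnt j (Nat.pos_of_ne_zero hj0) hj) hij]
  have hsplit : ∑ p ∈ range d ×ˢ range d, T p
      = T (0, 0) + ∑ p ∈ (range d ×ˢ range d).erase (0, 0), T p :=
    (Finset.add_sum_erase _ T hmem00).symm
  have hcard : ((range d ×ˢ range d).erase (0, 0)).card = d * d - 1 := by
    rw [Finset.card_erase_of_mem hmem00, Finset.card_product, card_range]
  have hnorm : ‖∑ p ∈ (range d ×ˢ range d).erase (0, 0), T p‖
      ≤ ((d * d - 1 : ℕ) : ℝ) * Real.sqrt q := by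
    calc ‖∑ p ∈ (range d ×ˢ range d).erase (0, 0), T p‖
        ≤ ∑ p ∈ (range d ×ˢ range d).erase (0, 0), ‖T p‖ := norm_sum_le _ _
      _ ≤ ((range d ×ˢ range d).erase (0, 0)).card • Real.sqrt q :=
          Finset.sum_le_card_nsmul _ _ _ hbd
      _ = ((d * d - 1 : ℕ) : ℝ) * Real.sqrt q := by rw [hcard, nsmul_eq_mul]
  have h5 : (d : ℂ) ^ 2 * S.card = ((q : ℂ) - 2)
      + ∑ p ∈ (range d ×ˢ range d).erase (0, 0), T p := by
    rw [← hT00, ← hsplit, ← E1, E2]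
  have h6 : |(d : ℝ) ^ 2 * S.card - ((q : ℝ) - 2)| ≤ ((d * d - 1 : ℕ) : ℝ) * Real.sqrt q := by
    calc |(d : ℝ) ^ 2 * S.card - ((q : ℝ) - 2)|
        = ‖(((d : ℝ) ^ 2 * S.card - ((q : ℝ) - 2) : ℝ) : ℂ)‖ := by
          rw [Complex.norm_real, Real.norm_eq_abs]
      _ = ‖(d : ℂ) ^ 2 * (S.card : ℂ) - ((q : ℂ) - 2)‖ := by push_cast; ring_nf
      _ = ‖∑ p ∈ (range d ×ˢ range d).erase (0, 0), T p‖ := by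
          rw [h5, add_sub_cancel_left]
      _ ≤ _ := hnorm
  have := abs_le.mp h6
  linarith [this.1]




set_option maxHeartbeats 2000000 in
/-- For odd characteristic, `λ ≠ 0` and `q > n²k¹⁶`, the equation `X^k + Y^k = λ` has
`n` solutions `(x_i, y_i)` with `x_i^k ≠ y_i^k`, and pairwise distinct `k`-th powers. -/
theorem stmt_9 (k n : ℕ) (hk : 2 ≤ k) (hn : 2 ≤ n)
    (F : Type*) [Field F] [Fintype F]
    (hchar : ringChar F ≠ 2) (lam : F) (hlam : lam ≠ 0)
    (hq : n ^ 2 * k ^ 16 < Fintype.card F) :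
    ∃ x y : Fin n → F,
      (∀ i, x i ^ k + y i ^ k = lam) ∧
      (∀ i, x i ^ k ≠ y i ^ k) ∧
      (∀ i j, i ≠ j → x i ^ k ≠ x j ^ k ∧ y i ^ k ≠ y j ^ k) := by
  classical
  set q := Fintype.card F with hqdef
  have hq2 : 2 ≤ q := Fintype.one_lt_card
  set d := Nat.gcd k (q - 1) with hddef
  have hd0 : 0 < d := Nat.gcd_pos_of_pos_left _ (by omega)
  have hdk : d ∣ k := Nat.gcd_dvd_left _ _
  have hdq : d ∣ q - 1 := Nat.gcd_dvd_right _ _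
  have hdk' : d ≤ k := Nat.le_of_dvd (by omega) hdk
  obtain ⟨χ, hχord⟩ := MulChar.exists_mulChar_orderOf F hdq
    (Complex.isPrimitiveRoot_exp d (by omega))
  set S := univ.filter (fun a : F => χ a = 1 ∧ χ (lam - a) = 1) with hS
  have hcount := aux_count χ hχord hlam
  -- numeric: n + 1 ≤ S.card
  have hScard : n + 1 ≤ S.card := by
    by_contra hcon
    push_neg at hcon
    have hcon' : (S.card : ℝ) ≤ n := by exact_mod_cast Nat.lt_succ_iff.mp hcon
    set sq := Real.sqrt q with hsq
    have hsq0 : 0 ≤ sq := Real.sqrt_nonneg _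
    have hsqq : sq * sq = q := Real.mul_self_sqrt (by positivity)
    have hqlt : ((n : ℝ) * k ^ 8) ^ 2 < (q : ℝ) := by
      have h0 : ((n ^ 2 * k ^ 16 : ℕ) : ℝ) < (q : ℝ) := by exact_mod_cast hq
      push_cast at h0
      nlinarith
    have hsqgt : (n : ℝ) * k ^ 8 < sq := by
      rw [hsq]
      exact (Real.lt_sqrt (by positivity)).mpr hqlt
    have hcast : ((d * d - 1 : ℕ) : ℝ) = (d : ℝ) * d - 1 := by
      have h1 : 1 ≤ d * d := Nat.one_le_iff_ne_zero.mpr (by positivity)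
      push_cast [Nat.cast_sub h1]
      ring
    rw [hcast] at hcount
    have hdR : (1 : ℝ) ≤ d := by exact_mod_cast hd0
    have hdkR : (d : ℝ) ≤ k := by exact_mod_cast hdk'
    have hkR : (2 : ℝ) ≤ k := by exact_mod_cast hk
    have hnR : (2 : ℝ) ≤ n := by exact_mod_cast hn
    have hchain : (q : ℝ) - 2 - ((d : ℝ) * d - 1) * sq ≤ (d : ℝ) ^ 2 * n := by
      refine le_trans hcount ?_
      have h2 : (0 : ℝ) ≤ (d : ℝ) ^ 2 := by positivity
      nlinarith
    have hdd : (d : ℝ) ^ 2 ≤ (k : ℝ) ^ 2 := by nlinarith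
    have hA : (d : ℝ) ^ 2 * n ≤ (k : ℝ) ^ 2 * n := mul_le_mul_of_nonneg_right hdd (by linarith)
    have hB : ((d : ℝ) * d - 1) * sq ≤ (k : ℝ) ^ 2 * sq :=
      mul_le_mul_of_nonneg_right (by nlinarith) hsq0
    have hq1 : (q : ℝ) ≤ (k : ℝ) ^ 2 * n + 2 + (k : ℝ) ^ 2 * sq := by linarith
    have hk8 : (2 : ℝ) ^ 8 ≤ (k : ℝ) ^ 8 := pow_le_pow_left₀ (by norm_num) hkR 8
    have hk6 : (64 : ℝ) ≤ (k : ℝ) ^ 6 := by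
      have h6 := pow_le_pow_left₀ (by norm_num : (0:ℝ) ≤ 2) hkR 6
      norm_num at h6
      linarith
    have hnk8 : (512 : ℝ) ≤ (n : ℝ) * k ^ 8 := by
      have := mul_le_mul hnR hk8 (by norm_num) (by linarith)
      norm_num at this
      linarith
    have hsq512 : (512 : ℝ) ≤ sq := by linarith
    have hsqpos : (0 : ℝ) < sq := by linarith
    have hn_sq : (n : ℝ) ≤ sq := by
      have h1 : (n : ℝ) ≤ (n : ℝ) * k ^ 8 :=
        le_mul_of_one_le_right (by linarith) (by linarith)
      linarith
    have hL : (n : ℝ) * k ^ 8 * sq < (q : ℝ) := by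
      rw [← hsqq]
      exact mul_lt_mul_of_pos_right hsqgt hsqpos
    have h128 : (128 : ℝ) ≤ (n : ℝ) * k ^ 6 := by
      have := mul_le_mul hnR hk6 (by norm_num) (by linarith)
      norm_num at this
      linarith
    have h129 : (128 : ℝ) * ((k : ℝ) ^ 2 * sq) ≤ ((n : ℝ) * k ^ 6) * ((k : ℝ) ^ 2 * sq) :=
      mul_le_mul_of_nonneg_right h128 (by positivity)
    have h130 : ((n : ℝ) * k ^ 6) * ((k : ℝ) ^ 2 * sq) = (n : ℝ) * k ^ 8 * sq := by ring
    have h131 : (k : ℝ) ^ 2 * n ≤ (k : ℝ) ^ 2 * sq :=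
      mul_le_mul_of_nonneg_left hn_sq (by positivity)
    have hk4 : (4 : ℝ) ≤ (k : ℝ) ^ 2 := by nlinarith
    have h132 : (2 : ℝ) ≤ (k : ℝ) ^ 2 * sq := by
      have := mul_le_mul hk4 hsq512 (by norm_num) (by positivity)
      norm_num at this
      linarith
    have hpos : (0 : ℝ) < (k : ℝ) ^ 2 * sq := by positivity
    linarith
  -- pick n distinct elements of S avoiding lam / 2
  set c := lam / 2 with hc
  have htwo : (2 : F) ≠ 0 := Ring.two_ne_zero hchar
  have hS' : n ≤ (S.erase c).card := by
    have := Finset.pred_card_le_card_erase (s := S) (a := c)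
    omega
  obtain ⟨T, hTsub, hTcard⟩ := Finset.exists_subset_card_eq hS'
  set e := (Finset.equivFinOfCardEq hTcard).symm with he
  set a : Fin n → F := fun i => ↑(e i) with ha
  have hainj : Function.Injective a := fun i j h => e.injective (Subtype.ext h)
  have hamem : ∀ i, a i ∈ S.erase c := fun i => hTsub (e i).2
  have haS : ∀ i, χ (a i) = 1 ∧ χ (lam - a i) = 1 := by
    intro i
    have := Finset.mem_of_mem_erase (hamem i)
    rw [hS, mem_filter] at this
    exact this.2
  have hane : ∀ i, a i ≠ c := fun i => Finset.ne_of_mem_erase (hamem i)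
  have hne0 : ∀ {b : F}, χ b = 1 → b ≠ 0 := by
    intro b h h0
    rw [h0, MulChar.map_nonunit χ not_isUnit_zero] at h
    exact one_ne_zero h.symm
  have hx : ∀ i, ∃ x : F, x ^ k = a i := fun i =>
    aux_ker_pow (by omega) χ hχord (hne0 (haS i).1) (haS i).1
  have hy : ∀ i, ∃ y : F, y ^ k = lam - a i := fun i =>
    aux_ker_pow (by omega) χ hχord (hne0 (haS i).2) (haS i).2
  choose x hxk using hx
  choose y hyk using hy
  refine ⟨x, y, fun i => by rw [hxk, hyk]; ring, fun i h => ?_, fun i j hij => ?_⟩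
  · rw [hxk, hyk] at h
    apply hane i
    rw [hc, eq_div_iff htwo]
    linear_combination h
  · constructor
    · intro h
      rw [hxk, hxk] at h
      exact hij (hainj h)
    · intro h
      rw [hyk, hyk] at h
      have : a i = a j := by linear_combination -h
      exact hij (hainj this)
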